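/- Let α > 0, β > 0, δ ≥ 0 be real numbers and define f(z) = i(δ + β/α) + β/(z + iα). Then f is a Stieltjes function: f is analytic on the open right half-plane, Re f(z) ≥ 0 for all z with Re z > 0, and Re((1/(iz))f(z)) ≥ 0 for all z with Re z > 0. -/

import Mathlib

open Complex

theorem stmt10 (α β δ : ℝ) (hα : 0 < α) (hβ : 0 < β) (hδ : 0 ≤ δ) :
    DifferentiableOn ℂ
      (fun z : ℂ => Complex.I * (δ + β / α) + β / (z + Complex.I * α))
      {z : ℂ | 0 < z.re} ∧
    (∀ z : ℂ, 0 < z.re →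
      0 ≤ (Complex.I * (δ + β / α) + β / (z + Complex.I * α)).re) ∧
    (∀ z : ℂ, 0 < z.re →
      0 ≤ ((1 / (Complex.I * z)) *
        (Complex.I * (δ + β / α) + β / (z + Complex.I * α))).re) := by
  have hw : ∀ z : ℂ, 0 < z.re → z + Complex.I * α ≠ 0 := by
    intro z hz h
    have h2 : (z + Complex.I * α).re = z.re := by simp
    rw [h] at h2
    simp at h2
    linarith
  refine ⟨?_, ?_, ?_⟩
  · apply DifferentiableOn.add
    · exact differentiableOn_const _
    · apply DifferentiableOn.div (differentiableOn_const _)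
      · exact differentiableOn_id.add (differentiableOn_const _)
      · intro z hz; exact hw z hz
  · intro z hz
    have h1 : 0 < Complex.normSq (z + Complex.I * α) := Complex.normSq_pos.mpr (hw z hz)
    simp only [Complex.add_re, Complex.mul_re, Complex.I_re, Complex.I_im,
      Complex.ofReal_re, Complex.ofReal_im, Complex.div_re]
    simp only [Complex.normSq_apply, Complex.add_re, Complex.add_im, Complex.mul_re,
      Complex.mul_im, Complex.I_re, Complex.I_im, Complex.ofReal_re, Complex.ofReal_im]
    have hd : (0:ℝ) ≤ (z.re + (0 * α - 1 * 0)) * (z.re + (0 * α - 1 * 0)) +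
        (z.im + (0 * 0 + 1 * α)) * (z.im + (0 * 0 + 1 * α)) := by positivity
    have hd' : (0:ℝ) < (z.re + (0 * α - 1 * 0)) * (z.re + (0 * α - 1 * 0)) +
        (z.im + (0 * 0 + 1 * α)) * (z.im + (0 * 0 + 1 * α)) := by nlinarith
    have him : ((β:ℂ)/(α:ℂ)).im = 0 := by rw [← Complex.ofReal_div]; simp
    rw [him]
    norm_num
    apply div_nonneg (mul_nonneg hβ.le hz.le)
    nlinarith [sq_nonneg z.re, sq_nonneg (z.im + α)]
  · intro z hz
    have hz0 : z ≠ 0 := fun h => by rw [h] at hz; simp at hz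
    have hwz := hw z hz
    have hc : (1 / (Complex.I * z)) *
        (Complex.I * (δ + β / α) + β / (z + Complex.I * α)) =
        ((↑(δ + β / α) : ℂ) * (z + Complex.I * α) - Complex.I * β) /
          (z * (z + Complex.I * α)) := by
      have hI : (Complex.I : ℂ) ≠ 0 := Complex.I_ne_zero
      have hαc : (α : ℂ) ≠ 0 := by exact_mod_cast hα.ne'
      field_simp
      push_cast
      field_simp
      ring_nf
      rw [Complex.I_sq]
      ring
    rw [hc, Complex.div_re, ← add_div]
    apply div_nonneg _ (Complex.normSq_nonneg _)
    simp only [Complex.sub_re, Complex.sub_im, Complex.add_re, Complex.add_im,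
      Complex.mul_re, Complex.mul_im, Complex.I_re, Complex.I_im,
      Complex.ofReal_re, Complex.ofReal_im]
    have hq0 : 0 < β / α := div_pos hβ hα
    have h0 : (β / α * α - β) * (2 * z.im * z.re + α * z.re) = 0 := by
      rw [div_mul_cancel₀ _ hα.ne']; ring
    have t1 : 0 ≤ δ * (z.re * ((z.im + α)^2 + z.re^2)) := by positivity
    have t2 : 0 ≤ (β / α) * (z.re * (z.re^2 + z.im^2)) := by positivity
    nlinarith [h0, t1, t2]
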